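/- For k \geq 1, in a Best-of-(2k+1) game with A serving first, the probability that A wins under the Standard Rule equals the probability that A wins under the Catch-Up Rule. -/
import Mathlib


/-- Win probability for player `A` in a service game played to `goal` points.
`next prevSrv aWon` gives the next server (`true` = A serves). `srv = true` means
A serves the current point; A wins on his serve with probability `p`, B wins on her
serve with probability `q`. `fuel` bounds the number of points played. -/
def winProb (p q : ℝ) (goal : ℕ) (next : Bool → Bool → Bool) :
    ℕ → ℕ → ℕ → Bool → ℝ
  | 0, _, _, _ => 0
  | fuel + 1, x, y, srv =>
    if goal ≤ x then 1
    else if goal ≤ y then 0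
    else
      (if srv then p else 1 - q) * winProb p q goal next fuel (x + 1) y (next srv true) +
        (1 - if srv then p else 1 - q) * winProb p q goal next fuel x (y + 1) (next srv false)

/-- Standard Rule: the winner of the point serves next. -/
def nextSR : Bool → Bool → Bool := fun _ aWon => aWon

/-- Catch-Up Rule: the loser of the point serves next. -/
def nextCR : Bool → Bool → Bool := fun _ aWon => !aWon

/-- `H p q a b t`: probability of at least `t` successes among `a` independent
trials of success probability `p` and `b` independent trials of success
probability `1 - q`. -/
def H (p q : ℝ) : ℕ → ℕ → ℕ → ℝ
  | _, _, 0 => 1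
  | 0, 0, _ + 1 => 0
  | a + 1, b, t + 1 => p * H p q a b t + (1 - p) * H p q a b (t + 1)
  | 0, b + 1, t + 1 => (1 - q) * H p q 0 b t + q * H p q 0 b (t + 1)
  termination_by a b _ => a + b

lemma H_zero (p q : ℝ) (a b : ℕ) : H p q a b 0 = 1 := by
  cases a <;> cases b <;> simp [H]

/-- Peeling the first `p`-trial. -/
lemma H_peel_u (p q : ℝ) (a b t : ℕ) :
    H p q (a + 1) b (t + 1) = p * H p q a b t + (1 - p) * H p q a b (t + 1) := by
  rw [H]

lemma H_base_v (p q : ℝ) (b t : ℕ) :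
    H p q 0 (b + 1) (t + 1) = (1 - q) * H p q 0 b t + q * H p q 0 b (t + 1) := by
  rw [H]

lemma H_big (p q : ℝ) : ∀ a b t : ℕ, a + b < t → H p q a b t = 0 := by
  intro a
  induction a with
  | zero =>
    intro b
    induction b with
    | zero =>
      intro t ht
      obtain ⟨t, rfl⟩ : ∃ t', t = t' + 1 := ⟨t - 1, by omega⟩
      simp [H]
    | succ b ih =>
      intro t ht
      obtain ⟨t, rfl⟩ : ∃ t', t = t' + 1 := ⟨t - 1, by omega⟩
      rw [H_base_v, ih t (by omega), ih (t + 1) (by omega)]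
      ring
  | succ a ih =>
    intro b t ht
    obtain ⟨t, rfl⟩ : ∃ t', t = t' + 1 := ⟨t - 1, by omega⟩
    rw [H_peel_u, ih b t (by omega), ih b (t + 1) (by omega)]
    ring

/-- Peeling off one `(1-q)`-trial instead of a `p`-trial. -/
lemma H_peel_v (p q : ℝ) : ∀ a b t : ℕ,
    H p q a (b + 1) (t + 1) = (1 - q) * H p q a b t + q * H p q a b (t + 1) := by
  intro a
  induction a with
  | zero => intro b t; exact H_base_v p q b t
  | succ a ih =>
    intro b t
    cases t with
    | zero =>
      rw [H_peel_u, H_zero, ih b 0, H_peel_u p q a b 0, H_zero, H_zero]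
      ring
    | succ t =>
      rw [H_peel_u, ih b t, ih b (t + 1),
        H_peel_u p q a b t, H_peel_u p q a b (t + 1)]
      ring

lemma winProb_one (p q : ℝ) (goal : ℕ) (next : Bool → Bool → Bool)
    (f x y : ℕ) (s : Bool) (hf : 1 ≤ f) (hx : goal ≤ x) :
    winProb p q goal next f x y s = 1 := by
  cases f with
  | zero => omega
  | succ f => simp [winProb, hx]

lemma winProb_zero (p q : ℝ) (goal : ℕ) (next : Bool → Bool → Bool)
    (f x y : ℕ) (s : Bool) (hf : 1 ≤ f) (hx : x < goal) (hy : goal ≤ y) :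
    winProb p q goal next f x y s = 0 := by
  cases f with
  | zero => omega
  | succ f => simp [winProb, hy, Nat.not_le.2 hx]

lemma key (p q : ℝ) (g : ℕ) :
    ∀ fuel rr ss x y, x + (rr + 1) = g → y + (ss + 1) = g → rr + ss + 2 ≤ fuel →
      (winProb p q g nextSR fuel x y true = H p q (rr + 1) ss (rr + 1)
      ∧ winProb p q g nextSR fuel x y false = H p q rr (ss + 1) (rr + 1)
      ∧ winProb p q g nextCR fuel x y true = H p q (ss + 1) rr (rr + 1)
      ∧ winProb p q g nextCR fuel x y false = H p q ss (rr + 1) (rr + 1)) := by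
  intro fuel
  induction fuel with
  | zero => intro rr ss x y _ _ hf; omega
  | succ fuel ih =>
    intro rr ss x y hx hy hf
    have hxg : ¬ g ≤ x := by omega
    have hyg : ¬ g ≤ y := by omega
    have hfuel1 : 1 ≤ fuel := by omega
    -- the four subcall values
    have hA : winProb p q g nextSR fuel (x + 1) y true = H p q rr ss rr := by
      cases rr with
      | zero =>
        rw [winProb_one p q g nextSR fuel (x+1) y true hfuel1 (by omega), H_zero]
      | succ r2 =>
        exact ((ih r2 ss (x + 1) y (by omega) hy (by omega)).1)
    have hB : winProb p q g nextSR fuel x (y + 1) false = H p q rr ss (rr + 1) := by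
      cases ss with
      | zero =>
        rw [winProb_zero p q g nextSR fuel x (y+1) false hfuel1 (by omega) (by omega),
          H_big p q rr 0 (rr + 1) (by omega)]
      | succ s2 =>
        exact ((ih rr s2 x (y + 1) hx (by omega) (by omega)).2.1)
    have hC : winProb p q g nextCR fuel (x + 1) y false = H p q ss rr rr := by
      cases rr with
      | zero =>
        rw [winProb_one p q g nextCR fuel (x+1) y false hfuel1 (by omega), H_zero]
      | succ r2 =>
        exact ((ih r2 ss (x + 1) y (by omega) hy (by omega)).2.2.2)
    have hD : winProb p q g nextCR fuel x (y + 1) true = H p q ss rr (rr + 1) := by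
      cases ss with
      | zero =>
        rw [winProb_zero p q g nextCR fuel x (y+1) true hfuel1 (by omega) (by omega),
          H_big p q 0 rr (rr + 1) (by omega)]
      | succ s2 =>
        exact ((ih rr s2 x (y + 1) hx (by omega) (by omega)).2.2.1)
    refine ⟨?_, ?_, ?_, ?_⟩
    · show (if g ≤ x then (1:ℝ) else if g ≤ y then 0 else
        p * winProb p q g nextSR fuel (x + 1) y true +
          (1 - p) * winProb p q g nextSR fuel x (y + 1) false)
          = H p q (rr + 1) ss (rr + 1)
      rw [if_neg hxg, if_neg hyg, hA, hB, H_peel_u]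
    · show (if g ≤ x then (1:ℝ) else if g ≤ y then 0 else
        (1 - q) * winProb p q g nextSR fuel (x + 1) y true +
          (1 - (1 - q)) * winProb p q g nextSR fuel x (y + 1) false)
          = H p q rr (ss + 1) (rr + 1)
      rw [if_neg hxg, if_neg hyg, hA, hB, H_peel_v]
      ring
    · show (if g ≤ x then (1:ℝ) else if g ≤ y then 0 else
        p * winProb p q g nextCR fuel (x + 1) y false +
          (1 - p) * winProb p q g nextCR fuel x (y + 1) true)
          = H p q (ss + 1) rr (rr + 1)
      rw [if_neg hxg, if_neg hyg, hC, hD, H_peel_u]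
    · show (if g ≤ x then (1:ℝ) else if g ≤ y then 0 else
        (1 - q) * winProb p q g nextCR fuel (x + 1) y false +
          (1 - (1 - q)) * winProb p q g nextCR fuel x (y + 1) true)
          = H p q ss (rr + 1) (rr + 1)
      rw [if_neg hxg, if_neg hyg, hC, hD, H_peel_v]
      ring

/-- For `k ≥ 1`, in a Best-of-(2k+1) game with A serving first, the probability that
A wins under the Standard Rule equals the probability that A wins under the
Catch-Up Rule. -/
theorem SR_eq_CR_winProb (k : ℕ) (hk : 1 ≤ k) (p q : ℝ)
    (hp0 : 0 < p) (hp1 : p < 1) (hq0 : 0 < q) (hq1 : q < 1) :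
    winProb p q (k + 1) nextSR (2 * k + 2) 0 0 true
      = winProb p q (k + 1) nextCR (2 * k + 2) 0 0 true := by
  have h := key p q (k + 1) (2 * k + 2) k k 0 0 (by omega) (by omega) (by omega)
  rw [h.1, h.2.2.1]
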